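/- Let C be a t-MIPPC(n,M,q) with n even, viewed via the bipartite graph G whose vertex classes are X = Y = Q^{n/2} and where an edge joins a ∈ X and b ∈ Y iff the concatenation (a,b) ∈ C. Then G contains no cycle of length 2t₀ for any 2 ≤ t₀ ≤ t; i.e., G has girth greater than 2t. -/
import Mathlib


/-- The descendant code `desc(C') = C'(1) × ⋯ × C'(n)` of a sub-code `C'`. -/
def descC {n q : ℕ} (C' : Finset (Fin n → Fin q)) : Set (Fin n → Fin q) :=
  {x | ∀ i, ∃ c ∈ C', c i = x i}

/-- `C` is a `t`-MIPPC(n,·,q): every nonempty family of nonempty sub-codes of size at most `t`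
with the same descendant code has a common codeword. -/
def isMIPPC {n q : ℕ} (t : ℕ) (C : Finset (Fin n → Fin q)) : Prop :=
  ∀ S : Set (Fin n → Fin q),
    (∃ C' : Finset (Fin n → Fin q), C' ⊆ C ∧ C'.Nonempty ∧ C'.card ≤ t ∧ descC C' = S) →
    ∃ c, ∀ C' : Finset (Fin n → Fin q),
      C' ⊆ C → C'.Nonempty → C'.card ≤ t → descC C' = S → c ∈ C'

/-- For a `t`-MIPPC of even length `m + m`, the associated bipartite graph on
`X = Y = Q^m`, with an edge between `a` and `b` iff the concatenation `(a,b)` is a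
codeword, contains no cycle of length `2t₀` for any `2 ≤ t₀ ≤ t`. -/
theorem mippc_no_short_cycles {t m q : ℕ} (C : Finset (Fin (m + m) → Fin q))
    (hC : isMIPPC t C) :
    ¬ ∃ t₀ : ℕ, 2 ≤ t₀ ∧ t₀ ≤ t ∧
      ∃ a b : ℕ → (Fin m → Fin q),
        (∀ i j, i < t₀ → j < t₀ → a i = a j → i = j) ∧
        (∀ i j, i < t₀ → j < t₀ → b i = b j → i = j) ∧
        (∀ i, i < t₀ → Fin.append (a i) (b i) ∈ C) ∧
        (∀ i, i < t₀ → Fin.append (a ((i + 1) % t₀)) (b i) ∈ C) := by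
  rintro ⟨t₀, ht2, htt, a, b, ha, hb, h1, h2⟩
  have ht0 : 0 < t₀ := by omega
  set f : ℕ → (Fin (m + m) → Fin q) := fun i => Fin.append (a i) (b i) with hf
  set g : ℕ → (Fin (m + m) → Fin q) := fun i => Fin.append (a ((i + 1) % t₀)) (b i) with hg
  set C₁ : Finset (Fin (m + m) → Fin q) := (Finset.range t₀).image f with hC₁
  set C₂ : Finset (Fin (m + m) → Fin q) := (Finset.range t₀).image g with hC₂
  -- the shift index
  have hshift : ∀ i, i < t₀ → ((i + t₀ - 1) % t₀ + 1) % t₀ = i := by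
    intro i hi
    have : ((i + t₀ - 1) % t₀ + 1) % t₀ = (i + t₀ - 1 + 1) % t₀ := Nat.mod_add_mod _ _ _
    rw [this]
    have : i + t₀ - 1 + 1 = i + t₀ := by omega
    rw [this, Nat.add_mod_right, Nat.mod_eq_of_lt hi]
  have hdesc : descC C₁ = descC C₂ := by
    ext x
    simp only [descC, Set.mem_setOf_eq, hC₁, hC₂, Finset.mem_image, Finset.mem_range]
    constructor
    · intro h j
      obtain ⟨c, ⟨i, hi, hfi⟩, hcj⟩ := h j
      subst hfi
      refine Fin.addCases (motive := fun j => f i j = x j →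
          ∃ c, (∃ i', i' < t₀ ∧ g i' = c) ∧ c j = x j) ?_ ?_ j hcj
      · intro k hk
        refine ⟨g ((i + t₀ - 1) % t₀), ⟨_, Nat.mod_lt _ ht0, rfl⟩, ?_⟩
        simp only [hg, hf, Fin.append_left] at hk ⊢
        rw [hshift i hi]
        exact hk
      · intro k hk
        refine ⟨g i, ⟨i, hi, rfl⟩, ?_⟩
        simp only [hg, hf, Fin.append_right] at hk ⊢
        exact hk
    · intro h j
      obtain ⟨c, ⟨i, hi, hgi⟩, hcj⟩ := h j
      subst hgi
      refine Fin.addCases (motive := fun j => g i j = x j →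
          ∃ c, (∃ i', i' < t₀ ∧ f i' = c) ∧ c j = x j) ?_ ?_ j hcj
      · intro k hk
        refine ⟨f ((i + 1) % t₀), ⟨_, Nat.mod_lt _ ht0, rfl⟩, ?_⟩
        simp only [hg, hf, Fin.append_left] at hk ⊢
        exact hk
      · intro k hk
        refine ⟨f i, ⟨i, hi, rfl⟩, ?_⟩
        simp only [hg, hf, Fin.append_right] at hk ⊢
        exact hk
  have hsub₁ : C₁ ⊆ C := by
    intro c hc
    obtain ⟨i, hi, rfl⟩ := Finset.mem_image.mp hc
    exact h1 i (Finset.mem_range.mp hi)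
  have hsub₂ : C₂ ⊆ C := by
    intro c hc
    obtain ⟨i, hi, rfl⟩ := Finset.mem_image.mp hc
    exact h2 i (Finset.mem_range.mp hi)
  have hne₁ : C₁.Nonempty := ⟨f 0, Finset.mem_image.mpr ⟨0, Finset.mem_range.mpr ht0, rfl⟩⟩
  have hne₂ : C₂.Nonempty := ⟨g 0, Finset.mem_image.mpr ⟨0, Finset.mem_range.mpr ht0, rfl⟩⟩
  have hcard₁ : C₁.card ≤ t :=
    le_trans (le_trans Finset.card_image_le (by simp)) htt
  have hcard₂ : C₂.card ≤ t :=
    le_trans (le_trans Finset.card_image_le (by simp)) htt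
  obtain ⟨c, hcmem⟩ := hC (descC C₁) ⟨C₁, hsub₁, hne₁, hcard₁, rfl⟩
  have hc₁ := hcmem C₁ hsub₁ hne₁ hcard₁ rfl
  have hc₂ := hcmem C₂ hsub₂ hne₂ hcard₂ hdesc.symm
  obtain ⟨i, hi, hfi⟩ := Finset.mem_image.mp hc₁
  obtain ⟨j, hj, hgj⟩ := Finset.mem_image.mp hc₂
  rw [Finset.mem_range] at hi hj
  have heq : f i = g j := by rw [hfi, hgj]
  have hbeq : b i = b j := by
    funext k
    have := congrFun heq (Fin.natAdd m k)
    simpa only [hf, hg, Fin.append_right] using this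
  have hij : i = j := hb i j hi hj hbeq
  subst hij
  have haeq : a i = a ((i + 1) % t₀) := by
    funext k
    have := congrFun heq (Fin.castAdd m k)
    simpa only [hf, hg, Fin.append_left] using this
  have : i = (i + 1) % t₀ := ha i _ hi (Nat.mod_lt _ ht0) haeq
  rcases Nat.lt_or_ge (i + 1) t₀ with h | h
  · rw [Nat.mod_eq_of_lt h] at this; omega
  · have h' : i + 1 = t₀ := by omega
    rw [h', Nat.mod_self] at this
    omega
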